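/- Let h : (Fin n → ℝ) → ℝ be twice continuously differentiable, let c : Fin n → ℝ, and define g : (Fin n → ℝ) → ℝ by g x = (c ⬝ᵥ x) * h x. Then g is twice differentiable and for all x and all directions u, w: iteratedFDeriv ℝ 2 g x ![u, w] = (c ⬝ᵥ x) * iteratedFDeriv ℝ 2 h x ![u, w] + (c ⬝ᵥ u) * (fderiv ℝ h x w) + (c ⬝ᵥ w) * (fderiv ℝ h x u). In matrix terms, the Hessian of g is H(g)(x) = (cᵀx) H(h)(x) + ∇h(x) cᵀ + c ∇h(x)ᵀ. -/

import Mathlib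

open Matrix

theorem hessian_of_inhomogeneous_product
    (n : ℕ) (h : (Fin n → ℝ) → ℝ) (hh : ContDiff ℝ 2 h)
    (c : Fin n → ℝ) (g : (Fin n → ℝ) → ℝ)
    (hg : g = fun x => (c ⬝ᵥ x) * h x) :
    ContDiff ℝ 2 g ∧
      ∀ (x u w : Fin n → ℝ),
        iteratedFDeriv ℝ 2 g x ![u, w] =
          (c ⬝ᵥ x) * iteratedFDeriv ℝ 2 h x ![u, w] +
            (c ⬝ᵥ u) * (fderiv ℝ h x w) + (c ⬝ᵥ w) * (fderiv ℝ h x u) := by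
  -- the continuous linear map x ↦ c ⬝ᵥ x
  set L : (Fin n → ℝ) →L[ℝ] ℝ := ∑ i, c i • ContinuousLinearMap.proj i with hL
  have hLapp : ∀ v : Fin n → ℝ, L v = c ⬝ᵥ v := by
    intro v
    simp [hL, dotProduct, ContinuousLinearMap.sum_apply]
  have hgL : g = fun x => L x * h x := by
    funext x; rw [hg, hLapp]
  have hdh : Differentiable ℝ h := hh.differentiable (by norm_num)
  have hdh2 : Differentiable ℝ (fun y => fderiv ℝ h y) :=
    (hh.fderiv_right (m := 1) le_rfl).differentiable (by norm_num)
  have hcd : ContDiff ℝ 2 g := by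
    rw [hgL]; exact (L.contDiff).mul hh
  refine ⟨hcd, fun x u w => ?_⟩
  -- first derivative of g
  have hfg : (fun y => fderiv ℝ g y) = fun y => h y • L + L y • fderiv ℝ h y := by
    funext y
    rw [hgL]
    have : (fun x => L x * h x) = fun x => L x • h x := by
      funext x; simp [smul_eq_mul]
    rw [this, fderiv_fun_smul (L.differentiableAt) (hdh y), L.fderiv]
    ext v
    simp only [ContinuousLinearMap.add_apply, ContinuousLinearMap.smulRight_apply,
      ContinuousLinearMap.smul_apply, smul_eq_mul]
    ring
  have h1 : DifferentiableAt ℝ (fun y => h y • L) x :=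
    (hdh x).smul_const L
  have h2 : DifferentiableAt ℝ (fun y => L y • fderiv ℝ h y) x :=
    (L.differentiableAt).smul (hdh2 x)
  have key : fderiv ℝ (fderiv ℝ g) x =
      fderiv ℝ (fun y => h y • L + L y • fderiv ℝ h y) x :=
    congrArg (fun f => fderiv ℝ f x) hfg
  rw [iteratedFDeriv_two_apply, iteratedFDeriv_two_apply]
  simp only [Matrix.cons_val_zero, Matrix.cons_val_one, Matrix.head_cons]
  rw [key, fderiv_fun_add h1 h2, fderiv_smul_const (hdh x) L,
    fderiv_fun_smul (L.differentiableAt) (hdh2 x), L.fderiv]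
  simp only [ContinuousLinearMap.add_apply, ContinuousLinearMap.smulRight_apply,
    ContinuousLinearMap.smul_apply, smul_eq_mul, ContinuousLinearMap.coe_smul',
    Pi.smul_apply]
  rw [hLapp, hLapp, hLapp]
  ring
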